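/- arXiv:2402.16401 — 3 statements merged into one kernel-verified Lean document; each statement's English description precedes it below -/
import Mathlib

section
/- Let I ⊆ ℝ be an open interval containing 0, μ, σ : I → ℝ continuous with σ(z) > 0 on I, ρ > 0, and S' : I → (0,∞) a scale density with speed density m'. Let ψ, φ : I → ℝ solve the homogeneous equation, let G : I → ℝ be twice differentiable, set h(z) = ψ(0)·φ(z) − φ(0)·ψ(z) and A(z) = (G'(z)·h(z) − G(z)·h'(z))/S'(z). Then A is differentiable on I and A'(z) = m'(z)·h(z)·(½·σ(z)²·G''(z) + μ(z)·G'(z) − ρ·G(z)) for all z ∈ I. -/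
/-- On an open interval `I = (lo, hi)` containing `0`, with `ψ, φ`
solutions of the homogeneous equation, `G` twice differentiable,
`h(z) = ψ(0)·φ(z) − φ(0)·ψ(z)` and `A(z) = (G'(z)·h(z) − G(z)·h'(z))/S'(z)`,
the function `A` is differentiable with
`A'(z) = m'(z)·h(z)·(½σ(z)²·G''(z) + μ(z)·G'(z) − ρ·G(z))` on `I`. -/
theorem stmt_11 (lo hi : ℝ) (μ σ S ψ ψ' ψ'' φ φ' φ'' G G' G'' : ℝ → ℝ) (ρ : ℝ)
    (hρ : 0 < ρ) (h0 : (0:ℝ) ∈ Set.Ioo lo hi)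
    (hμ : ContinuousOn μ (Set.Ioo lo hi))
    (hσ : ContinuousOn σ (Set.Ioo lo hi))
    (hσpos : ∀ z ∈ Set.Ioo lo hi, 0 < σ z)
    (hSpos : ∀ z ∈ Set.Ioo lo hi, 0 < S z)
    (hS : ∀ z ∈ Set.Ioo lo hi, HasDerivAt S (-(2 * μ z / (σ z) ^ 2) * S z) z)
    (hψ : ∀ z ∈ Set.Ioo lo hi, HasDerivAt ψ (ψ' z) z)
    (hψ' : ∀ z ∈ Set.Ioo lo hi, HasDerivAt ψ' (ψ'' z) z)
    (hφ : ∀ z ∈ Set.Ioo lo hi, HasDerivAt φ (φ' z) z)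
    (hφ' : ∀ z ∈ Set.Ioo lo hi, HasDerivAt φ' (φ'' z) z)
    (hψhom : ∀ z ∈ Set.Ioo lo hi, (σ z) ^ 2 / 2 * ψ'' z + μ z * ψ' z - ρ * ψ z = 0)
    (hφhom : ∀ z ∈ Set.Ioo lo hi, (σ z) ^ 2 / 2 * φ'' z + μ z * φ' z - ρ * φ z = 0)
    (hG : ∀ z ∈ Set.Ioo lo hi, HasDerivAt G (G' z) z)
    (hG' : ∀ z ∈ Set.Ioo lo hi, HasDerivAt G' (G'' z) z) :
    ∀ z ∈ Set.Ioo lo hi,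
      HasDerivAt
        (fun y => (G' y * (ψ 0 * φ y - φ 0 * ψ y)
          - G y * (ψ 0 * φ' y - φ 0 * ψ' y)) / S y)
        ((2 / ((σ z) ^ 2 * S z)) * (ψ 0 * φ z - φ 0 * ψ z) *
          ((σ z) ^ 2 / 2 * G'' z + μ z * G' z - ρ * G z)) z := by
  intro z hz
  have hσne : (σ z) ^ 2 ≠ 0 := pow_ne_zero _ (hσpos z hz).ne'
  have hSne : S z ≠ 0 := (hSpos z hz).ne'
  have hh : HasDerivAt (fun y => ψ 0 * φ y - φ 0 * ψ y)
      (ψ 0 * φ' z - φ 0 * ψ' z) z :=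
    ((hφ z hz).const_mul _).sub ((hψ z hz).const_mul _)
  have hh' : HasDerivAt (fun y => ψ 0 * φ' y - φ 0 * ψ' y)
      (ψ 0 * φ'' z - φ 0 * ψ'' z) z :=
    ((hφ' z hz).const_mul _).sub ((hψ' z hz).const_mul _)
  have hN : HasDerivAt (fun y => G' y * (ψ 0 * φ y - φ 0 * ψ y)
      - G y * (ψ 0 * φ' y - φ 0 * ψ' y))
      (G'' z * (ψ 0 * φ z - φ 0 * ψ z) + G' z * (ψ 0 * φ' z - φ 0 * ψ' z)
        - (G' z * (ψ 0 * φ' z - φ 0 * ψ' z) + G z * (ψ 0 * φ'' z - φ 0 * ψ'' z))) z :=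
    ((hG' z hz).mul hh).sub ((hG z hz).mul hh')
  have hA := hN.div (hS z hz) hSne
  refine HasDerivAt.congr_deriv hA ?_
  have hψh : ψ'' z = 2 * (ρ * ψ z - μ z * ψ' z) / (σ z) ^ 2 := by
    have := hψhom z hz; field_simp at this ⊢; rw [eq_div_iff hσne]; linarith
  have hφh : φ'' z = 2 * (ρ * φ z - μ z * φ' z) / (σ z) ^ 2 := by
    have := hφhom z hz; field_simp at this ⊢; rw [eq_div_iff hσne]; linarith
  rw [hψh, hφh]
  field_simp [(hσpos z hz).ne']
  ring
end

section
/- Let I ⊆ ℝ be an open interval containing [0,∞), μ, σ : I → ℝ continuous with σ(z) > 0 on I, ρ > 0, and S' : I → (0,∞) a scale density with speed density m'. Let ψ, φ : I → ℝ be twice continuously differentiable solutions of the homogeneous equation with ψ(0) > 0, φ(0) > 0, ψ'(z) > 0 and φ'(z) < 0 for all z ∈ I, and suppose φ'(z)/S'(z) → 0 and ψ'(z)/S'(z) → +∞ as z → ∞. Let G : I → ℝ be twice continuously differentiable with G(0) < 0, write (LG)(z) = ½·σ(z)²·G''(z) + μ(z)·G'(z) − ρ·G(z), and assume there exists z̃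 > 0 with (LG)(z) > 0 for 0 ≤ z < z̃, (LG)(z̃) = 0, and (LG)(z) < 0 for z > z̃, and there exist c > 0 and z₀ > z̃ with (LG)(z) ≤ −c for all z ≥ z₀. Define h(z) = ψ(0)·φ(z) − φ(0)·ψ(z) and A(z) = (G'(z)·h(z) − G(z)·h'(z))/S'(z). Then there exists exactly one b ∈ (0,∞) with A(b) = 0, and this b satisfies b > z̃. -/
open Filter Set

set_option maxHeartbeats 1600000


/-- On an open interval `I = (a, ∞)` containing `[0,∞)` (i.e. `a < 0`),
under the stated hypotheses on `ψ, φ, G` and the sign/limit conditions on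
`(LG)(z) = ½σ(z)²·G''(z) + μ(z)·G'(z) − ρ·G(z)`, the equation `A(b) = 0`, where
`h(z) = ψ(0)·φ(z) − φ(0)·ψ(z)` and `A(z) = (G'(z)·h(z) − G(z)·h'(z))/S'(z)`, has
exactly one solution `b ∈ (0,∞)`, and this solution satisfies `b > z̃`. -/
theorem stmt_12 (a : ℝ) (ha : a < 0) (μ σ S ψ ψ' ψ'' φ φ' φ'' G G' G'' : ℝ → ℝ)
    (ρ : ℝ) (hρ : 0 < ρ)
    (hμ : ContinuousOn μ (Set.Ioi a))
    (hσ : ContinuousOn σ (Set.Ioi a))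
    (hσpos : ∀ z ∈ Set.Ioi a, 0 < σ z)
    (hSpos : ∀ z ∈ Set.Ioi a, 0 < S z)
    (hS : ∀ z ∈ Set.Ioi a, HasDerivAt S (-(2 * μ z / (σ z) ^ 2) * S z) z)
    (hψ : ∀ z ∈ Set.Ioi a, HasDerivAt ψ (ψ' z) z)
    (hψ' : ∀ z ∈ Set.Ioi a, HasDerivAt ψ' (ψ'' z) z)
    (hψ''c : ContinuousOn ψ'' (Set.Ioi a))
    (hφ : ∀ z ∈ Set.Ioi a, HasDerivAt φ (φ' z) z)
    (hφ' : ∀ z ∈ Set.Ioi a, HasDerivAt φ' (φ'' z) z)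
    (hφ''c : ContinuousOn φ'' (Set.Ioi a))
    (hψhom : ∀ z ∈ Set.Ioi a, (σ z) ^ 2 / 2 * ψ'' z + μ z * ψ' z - ρ * ψ z = 0)
    (hφhom : ∀ z ∈ Set.Ioi a, (σ z) ^ 2 / 2 * φ'' z + μ z * φ' z - ρ * φ z = 0)
    (hψ0 : 0 < ψ 0) (hφ0 : 0 < φ 0)
    (hψ'pos : ∀ z ∈ Set.Ioi a, 0 < ψ' z)
    (hφ'neg : ∀ z ∈ Set.Ioi a, φ' z < 0)
    (hφlim : Filter.Tendsto (fun z => φ' z / S z) Filter.atTop (nhds 0))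
    (hψlim : Filter.Tendsto (fun z => ψ' z / S z) Filter.atTop Filter.atTop)
    (hG : ∀ z ∈ Set.Ioi a, HasDerivAt G (G' z) z)
    (hG' : ∀ z ∈ Set.Ioi a, HasDerivAt G' (G'' z) z)
    (hG''c : ContinuousOn G'' (Set.Ioi a))
    (hG0 : G 0 < 0)
    (ztil : ℝ) (hztil : 0 < ztil)
    (hLpos : ∀ z : ℝ, 0 ≤ z → z < ztil →
      0 < (σ z) ^ 2 / 2 * G'' z + μ z * G' z - ρ * G z)
    (hLzero : (σ ztil) ^ 2 / 2 * G'' ztil + μ ztil * G' ztil - ρ * G ztil = 0)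
    (hLneg : ∀ z : ℝ, ztil < z →
      (σ z) ^ 2 / 2 * G'' z + μ z * G' z - ρ * G z < 0)
    (hLbdd : ∃ c > (0:ℝ), ∃ z₀ > ztil, ∀ z : ℝ, z₀ ≤ z →
      (σ z) ^ 2 / 2 * G'' z + μ z * G' z - ρ * G z ≤ -c) :
    ∃ b : ℝ, 0 < b ∧ ztil < b ∧
      (G' b * (ψ 0 * φ b - φ 0 * ψ b) - G b * (ψ 0 * φ' b - φ 0 * ψ' b)) / S b = 0 ∧
      ∀ b' : ℝ, 0 < b' →
        (G' b' * (ψ 0 * φ b' - φ 0 * ψ b')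
          - G b' * (ψ 0 * φ' b' - φ 0 * ψ' b')) / S b' = 0 → b' = b := by
  classical
  have hmem : ∀ z : ℝ, 0 ≤ z → z ∈ Set.Ioi a := fun z hz => lt_of_lt_of_le ha hz
  have hSnz : ∀ z ∈ Set.Ioi a, S z ≠ 0 := fun z hz => (hSpos z hz).ne'
  have hσnz : ∀ z ∈ Set.Ioi a, σ z ≠ 0 := fun z hz => (hσpos z hz).ne'
  set h : ℝ → ℝ := fun z => ψ 0 * φ z - φ 0 * ψ z with hhdef
  set k : ℝ → ℝ := fun z => ψ 0 * φ' z - φ 0 * ψ' z with hkdef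
  set k' : ℝ → ℝ := fun z => ψ 0 * φ'' z - φ 0 * ψ'' z with hk'def
  set L : ℝ → ℝ := fun z => (σ z) ^ 2 / 2 * G'' z + μ z * G' z - ρ * G z with hLdef
  set A : ℝ → ℝ := fun z => (G' z * h z - G z * k z) / S z with hAdef
  -- derivatives of h and k
  have hhd : ∀ z ∈ Set.Ioi a, HasDerivAt h (k z) z := by
    intro z hz
    exact ((hφ z hz).const_mul (ψ 0)).sub ((hψ z hz).const_mul (φ 0))
  have hkd : ∀ z ∈ Set.Ioi a, HasDerivAt k (k' z) z := by
    intro z hz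
    exact ((hφ' z hz).const_mul (ψ 0)).sub ((hψ' z hz).const_mul (φ 0))
  -- h solves the homogeneous equation
  have hhhom : ∀ z ∈ Set.Ioi a, (σ z) ^ 2 / 2 * k' z + μ z * k z - ρ * h z = 0 := by
    intro z hz
    have h1 := hψhom z hz
    have h2 := hφhom z hz
    simp only [hhdef, hkdef, hk'def]
    linear_combination ψ 0 * h2 - φ 0 * h1
  -- derivative of A
  have hAd : ∀ z ∈ Set.Ioi a,
      HasDerivAt A (L z * h z * (2 / ((σ z) ^ 2 * S z))) z := by
    intro z hz
    have hN : HasDerivAt (fun z => G' z * h z - G z * k z)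
        (G'' z * h z - G z * k' z) z := by
      have := ((hG' z hz).mul (hhd z hz)).sub ((hG z hz).mul (hkd z hz))
      refine this.congr_deriv (Eq.symm ?_)
      ring
    have hdiv := hN.div (hS z hz) (hSnz z hz)
    refine hdiv.congr_deriv (Eq.symm ?_)
    have hs := hσnz z hz
    have hSn := hSnz z hz
    have hrel := hhhom z hz
    simp only [hLdef]
    field_simp
    ring_nf
    linear_combination (2 * G z) * hrel
  -- derivative of k/S
  have hkSd : ∀ z ∈ Set.Ioi a,
      HasDerivAt (fun z => k z / S z) (ρ * h z * (2 / ((σ z) ^ 2 * S z))) z := by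
    intro z hz
    have hdiv := (hkd z hz).div (hS z hz) (hSnz z hz)
    refine hdiv.congr_deriv (Eq.symm ?_)
    have hs := hσnz z hz
    have hSn := hSnz z hz
    have hrel := hhhom z hz
    field_simp
    ring_nf
    linear_combination (-2) * hrel
  -- positivity of m'
  have hm' : ∀ z ∈ Set.Ioi a, 0 < 2 / ((σ z) ^ 2 * S z) := by
    intro z hz
    exact div_pos two_pos (mul_pos (pow_pos (hσpos z hz) 2) (hSpos z hz))
  -- k is negative
  have hkneg : ∀ z ∈ Set.Ioi a, k z < 0 := by
    intro z hz
    have h1 := hψ'pos z hz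
    have h2 := hφ'neg z hz
    have : ψ 0 * φ' z < 0 := mul_neg_of_pos_of_neg hψ0 h2
    have : 0 < φ 0 * ψ' z := mul_pos hφ0 h1
    simp only [hkdef]
    nlinarith
  -- h is strictly decreasing on [0, ∞), h 0 = 0, hence h < 0 on (0, ∞)
  have hh0 : h 0 = 0 := by simp only [hhdef]; ring
  have hanti : StrictAntiOn h (Set.Ici (0:ℝ)) := by
    apply strictAntiOn_of_deriv_neg (convex_Ici 0)
    · intro z hz
      exact (hhd z (hmem z hz)).continuousAt.continuousWithinAt
    · intro z hz
      rw [interior_Ici] at hz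
      rw [(hhd z (hmem z hz.le)).deriv]
      exact hkneg z (hmem z hz.le)
  have hhneg : ∀ z : ℝ, 0 < z → h z < 0 := by
    intro z hz
    have := hanti (self_mem_Ici) (le_of_lt hz : (0:ℝ) ≤ z) hz
    rwa [hh0] at this
  -- A 0 < 0
  have hA0 : A 0 < 0 := by
    have hk0 : k 0 < 0 := hkneg 0 (hmem 0 le_rfl)
    have hS0 : 0 < S 0 := hSpos 0 (hmem 0 le_rfl)
    have : G' 0 * h 0 - G 0 * k 0 < 0 := by
      rw [hh0]
      nlinarith
    exact div_neg_of_neg_of_pos this hS0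
  -- A is strictly decreasing on [0, ztil]
  have hAanti : StrictAntiOn A (Set.Icc 0 ztil) := by
    apply strictAntiOn_of_deriv_neg (convex_Icc 0 ztil)
    · intro z hz
      exact (hAd z (hmem z hz.1)).continuousAt.continuousWithinAt
    · intro z hz
      rw [interior_Icc] at hz
      rw [(hAd z (hmem z hz.1.le)).deriv]
      have hL : 0 < L z := hLpos z hz.1.le hz.2
      have hhz : h z < 0 := hhneg z hz.1
      have hm := hm' z (hmem z hz.1.le)
      exact mul_neg_of_neg_of_pos (mul_neg_of_pos_of_neg hL hhz) hm
  -- A is strictly increasing on [ztil, ∞)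
  have hAmono : StrictMonoOn A (Set.Ici ztil) := by
    apply strictMonoOn_of_deriv_pos (convex_Ici ztil)
    · intro z hz
      exact (hAd z (hmem z (hztil.le.trans hz))).continuousAt.continuousWithinAt
    · intro z hz
      rw [interior_Ici] at hz
      have hz0 : (0:ℝ) ≤ z := (hztil.trans hz).le
      rw [(hAd z (hmem z hz0)).deriv]
      have hL : L z < 0 := hLneg z hz
      have hhz : h z < 0 := hhneg z (hztil.trans hz)
      have hm := hm' z (hmem z hz0)
      exact mul_pos (mul_pos_of_neg_of_neg hL hhz) hm
  have hAztil : A ztil < 0 := (hAanti (Set.left_mem_Icc.2 hztil.le)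
    (Set.right_mem_Icc.2 hztil.le) hztil).trans hA0
  -- k/S tends to -∞
  have hkSlim : Tendsto (fun z => k z / S z) atTop atBot := by
    have h1 : Tendsto (fun z => ψ 0 * (φ' z / S z)) atTop (nhds 0) := by
      simpa using hφlim.const_mul (ψ 0)
    have h2 : Tendsto (fun z => φ 0 * (ψ' z / S z)) atTop atTop :=
      hψlim.const_mul_atTop hφ0
    have h3 : Tendsto (fun z => -(φ 0 * (ψ' z / S z))) atTop atBot :=
      tendsto_neg_atTop_atBot.comp h2
    have h4 : ∀ᶠ z in atTop, ψ 0 * (φ' z / S z) ≤ 1 := by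
      filter_upwards [h1.eventually (eventually_le_nhds (by norm_num : (0:ℝ) < 1))] with z hz
      exact hz
    have h5 := tendsto_atBot_add_left_of_ge' Filter.atTop (1:ℝ) h4 h3
    refine h5.congr fun z => ?_
    show ψ 0 * (φ' z / S z) + -(φ 0 * (ψ' z / S z)) = (ψ 0 * φ' z - φ 0 * ψ' z) / S z
    ring
  -- eventual lower bound for A via the function B
  obtain ⟨c, hc, z₀, hz₀, hLb⟩ := hLbdd
  set B : ℝ → ℝ := fun z => A z + c / ρ * (k z / S z) with hBdef
  have hBd : ∀ z ∈ Set.Ioi a,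
      HasDerivAt B ((L z + c) * h z * (2 / ((σ z) ^ 2 * S z))) z := by
    intro z hz
    have := (hAd z hz).add ((hkSd z hz).const_mul (c / ρ))
    refine this.congr_deriv (Eq.symm ?_)
    have hρ' : ρ ≠ 0 := hρ.ne'
    have hs := hσnz z hz
    have hSn := hSnz z hz
    field_simp
  have hBmono : MonotoneOn B (Set.Ici z₀) := by
    apply monotoneOn_of_deriv_nonneg (convex_Ici z₀)
    · intro z hz
      exact (hBd z (hmem z ((hztil.trans hz₀).le.trans hz))).continuousAt.continuousWithinAt
    · intro z hz
      rw [interior_Ici] at hz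
      exact (hBd z (hmem z ((hztil.trans hz₀).trans hz).le)).differentiableAt.differentiableWithinAt
    · intro z hz
      rw [interior_Ici] at hz
      rw [(hBd z (hmem z ((hztil.trans hz₀).trans hz).le)).deriv]
      have hL : L z + c ≤ 0 := by
        have := hLb z hz.le
        simp only [hLdef]
        linarith
      have hhz : h z < 0 := hhneg z ((hztil.trans hz₀).trans hz)
      have hm := hm' z (hmem z ((hztil.trans hz₀).trans hz).le)
      have h8 : 0 ≤ (L z + c) * h z := by nlinarith
      positivity
  -- find z₁ with A z₁ > 0
  have hcρ : 0 < c / ρ := div_pos hc hρ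
  have hev : ∀ᶠ z in atTop, k z / S z < ρ / c * (B z₀ - 1) :=
    hkSlim.eventually (eventually_lt_atBot _)
  obtain ⟨z₁, hz₁k, hz₁ge⟩ := (hev.and (eventually_ge_atTop z₀)).exists
  have hAz₁ : 0 < A z₁ := by
    have hB : B z₀ ≤ B z₁ := hBmono Set.self_mem_Ici hz₁ge hz₁ge
    have h6 : c / ρ * (k z₁ / S z₁) < c / ρ * (ρ / c * (B z₀ - 1)) :=
      (mul_lt_mul_iff_right₀ hcρ).2 hz₁k
    have h7 : c / ρ * (ρ / c * (B z₀ - 1)) = B z₀ - 1 := by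
      field_simp
    have h8 : c / ρ * (k z₁ / S z₁) < B z₀ - 1 := h7 ▸ h6
    have hAeq : A z₁ = B z₁ - c / ρ * (k z₁ / S z₁) := by simp only [hBdef]; ring
    rw [hAeq]
    clear_value A B
    linarith [h8, hB]
  -- IVT on [ztil, z₁]
  have hz₁gt : ztil < z₁ := hz₀.trans_le hz₁ge
  have hAcont : ContinuousOn A (Set.Icc ztil z₁) := by
    intro z hz
    exact (hAd z (hmem z (hztil.le.trans hz.1))).continuousAt.continuousWithinAt
  have hIVT := intermediate_value_Icc hz₁gt.le hAcont
  have h0mem : (0:ℝ) ∈ Set.Icc (A ztil) (A z₁) := ⟨hAztil.le, hAz₁.le⟩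
  obtain ⟨b, hbmem, hAb⟩ := hIVT h0mem
  have hbgt : ztil < b := by
    rcases lt_or_eq_of_le hbmem.1 with h | h
    · exact h
    · exfalso; rw [← h] at hAb; rw [hAb] at hAztil; exact lt_irrefl 0 hAztil
  refine ⟨b, hztil.trans hbgt, hbgt, hAb, ?_⟩
  intro b' hb' hAb'
  have hAb'2 : A b' = 0 := hAb'
  by_cases hcase : b' ≤ ztil
  · exfalso
    have : A b' < A 0 := hAanti (Set.left_mem_Icc.2 hztil.le) ⟨hb'.le, hcase⟩ hb'
    rw [hAb'2] at this
    linarith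
  · push_neg at hcase
    exact hAmono.injOn (Set.mem_Ici.2 hcase.le) (Set.mem_Ici.2 hbgt.le) (by rw [hAb'2, hAb])
end

section
/- Let I ⊆ ℝ be an open interval containing 0, μ, σ : I → ℝ continuous with σ(z) > 0 on I, ρ > 0, and S' : I → (0,∞) a scale density with speed density m'. Let ψ, φ : I → ℝ solve the homogeneous equation, let G : I → ℝ be twice continuously differentiable, set h(z) = ψ(0)·φ(z) − φ(0)·ψ(z) and A(z) = (G'(z)·h(z) − G(z)·h'(z))/S'(z). Suppose b ∈ I satisfies h(b) < 0, A(b) = 0, and ½·σ(b)²·G''(b) + μ(b)·G'(b) − ρ·G(b) < 0. Then the function F(z) = G(z)/h(z), defined on a neighborhood of b where h ≠ 0, satisfies F'(b) = 0 and F''(b) > 0; in particular F has a strict local minimum at b. -/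
/-- With `h(z) = ψ(0)·φ(z) − φ(0)·ψ(z)` and
`A(z) = (G'(z)·h(z) − G(z)·h'(z))/S'(z)`, if `b ∈ I` satisfies `h(b) < 0`,
`A(b) = 0` and `½σ(b)²·G''(b) + μ(b)·G'(b) − ρ·G(b) < 0`, then `F(z) = G(z)/h(z)`
satisfies `F'(b) = 0` and `F''(b) > 0`; in particular `F` has a strict local
minimum at `b`. -/
theorem stmt_13 (lo hi : ℝ) (μ σ S ψ ψ' ψ'' φ φ' φ'' G G' G'' : ℝ → ℝ) (ρ : ℝ)
    (hρ : 0 < ρ) (h0 : (0:ℝ) ∈ Set.Ioo lo hi)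
    (hμ : ContinuousOn μ (Set.Ioo lo hi))
    (hσ : ContinuousOn σ (Set.Ioo lo hi))
    (hσpos : ∀ z ∈ Set.Ioo lo hi, 0 < σ z)
    (hSpos : ∀ z ∈ Set.Ioo lo hi, 0 < S z)
    (hS : ∀ z ∈ Set.Ioo lo hi, HasDerivAt S (-(2 * μ z / (σ z) ^ 2) * S z) z)
    (hψ : ∀ z ∈ Set.Ioo lo hi, HasDerivAt ψ (ψ' z) z)
    (hψ' : ∀ z ∈ Set.Ioo lo hi, HasDerivAt ψ' (ψ'' z) z)
    (hφ : ∀ z ∈ Set.Ioo lo hi, HasDerivAt φ (φ' z) z)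
    (hφ' : ∀ z ∈ Set.Ioo lo hi, HasDerivAt φ' (φ'' z) z)
    (hψhom : ∀ z ∈ Set.Ioo lo hi, (σ z) ^ 2 / 2 * ψ'' z + μ z * ψ' z - ρ * ψ z = 0)
    (hφhom : ∀ z ∈ Set.Ioo lo hi, (σ z) ^ 2 / 2 * φ'' z + μ z * φ' z - ρ * φ z = 0)
    (hG : ∀ z ∈ Set.Ioo lo hi, HasDerivAt G (G' z) z)
    (hG' : ∀ z ∈ Set.Ioo lo hi, HasDerivAt G' (G'' z) z)
    (hG''c : ContinuousOn G'' (Set.Ioo lo hi))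
    (b : ℝ) (hb : b ∈ Set.Ioo lo hi)
    (hhb : ψ 0 * φ b - φ 0 * ψ b < 0)
    (hAb : (G' b * (ψ 0 * φ b - φ 0 * ψ b)
      - G b * (ψ 0 * φ' b - φ 0 * ψ' b)) / S b = 0)
    (hLGb : (σ b) ^ 2 / 2 * G'' b + μ b * G' b - ρ * G b < 0) :
    ∃ F' : ℝ → ℝ,
      (∀ᶠ z in nhds b,
        HasDerivAt (fun y => G y / (ψ 0 * φ y - φ 0 * ψ y)) (F' z) z) ∧
      F' b = 0 ∧
      (∃ c : ℝ, 0 < c ∧ HasDerivAt F' c b) ∧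
      (∀ᶠ z in nhdsWithin b {b}ᶜ,
        G b / (ψ 0 * φ b - φ 0 * ψ b) < G z / (ψ 0 * φ z - φ 0 * ψ z)) := by
  classical
  set h : ℝ → ℝ := fun z => ψ 0 * φ z - φ 0 * ψ z with hhdef
  set h1 : ℝ → ℝ := fun z => ψ 0 * φ' z - φ 0 * ψ' z with hh1def
  set F : ℝ → ℝ := fun y => G y / h y with hFdef
  set F' : ℝ → ℝ := fun z => (G' z * h z - G z * h1 z) / (h z) ^ 2 with hF'def
  -- h and h1 have derivatives on I
  have hhD : ∀ z ∈ Set.Ioo lo hi, HasDerivAt h (h1 z) z := fun z hz =>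
    ((hφ z hz).const_mul (ψ 0)).sub ((hψ z hz).const_mul (φ 0))
  have hh1D : ∀ z ∈ Set.Ioo lo hi, HasDerivAt h1 (ψ 0 * φ'' z - φ 0 * ψ'' z) z := fun z hz =>
    ((hφ' z hz).const_mul (ψ 0)).sub ((hψ' z hz).const_mul (φ 0))
  -- neighborhood where h < 0 and we are inside I
  have hIoo : Set.Ioo lo hi ∈ nhds b := (isOpen_Ioo).mem_nhds hb
  have hhc : ContinuousAt h b := (hhD b hb).continuousAt
  have hneg : ∀ᶠ z in nhds b, h z < 0 := hhc.eventually_lt_const hhb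
  have hU : ∀ᶠ z in nhds b, z ∈ Set.Ioo lo hi ∧ h z < 0 :=
    (Filter.eventually_mem_set.2 hIoo).and hneg
  obtain ⟨δ, hδpos, hδ⟩ := Metric.eventually_nhds_iff_ball.1 hU
  have hball : ∀ z ∈ Metric.ball b δ, HasDerivAt F (F' z) z := by
    intro z hz
    obtain ⟨hzI, hzneg⟩ := hδ z hz
    exact (hG z hzI).div (hhD z hzI) (ne_of_lt hzneg)
  -- F' b = 0
  have hSb : S b ≠ 0 := ne_of_gt (hSpos b hb)
  have hW0 : G' b * h b - G b * h1 b = 0 := by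
    have := hAb
    field_simp [hSb] at this
    simpa [hhdef, hh1def] using this
  have hF'b : F' b = 0 := by simp [hF'def, hW0]
  -- second derivative value
  set c : ℝ := (G'' b * h b - G b * (ψ 0 * φ'' b - φ 0 * ψ'' b)) / (h b) ^ 2 with hcdef
  have hhb' : h b ≠ 0 := ne_of_lt hhb
  have hWD : HasDerivAt (fun z => G' z * h z - G z * h1 z)
      (G'' b * h b + G' b * h1 b - (G' b * h1 b + G b * (ψ 0 * φ'' b - φ 0 * ψ'' b))) b :=
    ((hG' b hb).mul (hhD b hb)).sub ((hG b hb).mul (hh1D b hb))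
  have hh2D : HasDerivAt (fun z => (h z) ^ 2) (2 * h b * h1 b) b := by
    have := (hhD b hb).fun_pow 2
    simpa [mul_comm, mul_assoc, mul_left_comm] using this
  have hF'D : HasDerivAt F' c b := by
    have := hWD.fun_div hh2D (pow_ne_zero 2 hhb')
    refine this.congr_deriv ?_
    rw [hcdef]
    rw [hW0]
    field_simp
    ring
  -- positivity of c
  have hhom : (σ b) ^ 2 / 2 * (ψ 0 * φ'' b - φ 0 * ψ'' b) + μ b * h1 b - ρ * h b = 0 := by
    have h1e := hψhom b hb
    have h2e := hφhom b hb
    simp only [hh1def, hhdef]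
    linear_combination (ψ 0) * h2e - (φ 0) * h1e
  have hσb : 0 < σ b := hσpos b hb
  have hnum : 0 < G'' b * h b - G b * (ψ 0 * φ'' b - φ 0 * ψ'' b) := by
    have key : (σ b) ^ 2 / 2 * (G'' b * h b - G b * (ψ 0 * φ'' b - φ 0 * ψ'' b))
        = h b * ((σ b) ^ 2 / 2 * G'' b + μ b * G' b - ρ * G b) := by
      linear_combination (-(G b)) * hhom - μ b * hW0
    have hP : 0 < h b * ((σ b) ^ 2 / 2 * G'' b + μ b * G' b - ρ * G b) :=
      mul_pos_of_neg_of_neg hhb hLGb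
    have h2pos : (0:ℝ) < σ b ^ 2 / 2 := by positivity
    rw [← key] at hP
    by_contra hle
    push_neg at hle
    nlinarith [mul_nonpos_of_nonneg_of_nonpos (le_of_lt h2pos) hle]
  have hc : 0 < c := div_pos hnum (by positivity)
  refine ⟨F', Metric.eventually_nhds_iff_ball.2 ⟨δ, hδpos, hball⟩, hF'b, ⟨c, hc, hF'D⟩, ?_⟩
  -- strict local minimum via MVT
  have hslope : ∀ᶠ z in nhdsWithin b {b}ᶜ, 0 < slope F' b z := by
    have := hasDerivAt_iff_tendsto_slope.1 hF'D
    exact this.eventually (eventually_gt_nhds hc)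
  have hsign : ∀ᶠ z in nhdsWithin b {b}ᶜ, (b < z → 0 < F' z) ∧ (z < b → F' z < 0) := by
    filter_upwards [hslope] with z hz
    rw [slope_def_field, div_pos_iff] at hz
    constructor
    · intro hbz
      rcases hz with ⟨h1, _⟩ | ⟨_, h2⟩
      · simpa [hF'b] using h1
      · linarith
    · intro hzb
      rcases hz with ⟨_, h2⟩ | ⟨h1, _⟩
      · linarith
      · have := h1
        simp only [hF'b, sub_zero] at this
        linarith
  rw [eventually_nhdsWithin_iff, Metric.eventually_nhds_iff] at hsign ⊢
  obtain ⟨ε, hεpos, hε⟩ := hsign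
  refine ⟨min ε δ, lt_min hεpos hδpos, ?_⟩
  intro z hzball hzne
  have hzε : dist z b < ε := lt_of_lt_of_le hzball (min_le_left _ _)
  have hzδ : dist z b < δ := lt_of_lt_of_le hzball (min_le_right _ _)
  have hzne' : z ≠ b := hzne
  -- any point between b and z is in ball b δ and ball b ε
  have hbetween : ∀ y, (b ≤ y ∧ y ≤ z) ∨ (z ≤ y ∧ y ≤ b) → dist y b < min ε δ := by
    intro y hy
    rw [Real.dist_eq] at hzball ⊢
    rcases hy with ⟨h1, h2⟩ | ⟨h1, h2⟩
    · rw [abs_lt] at hzball ⊢; constructor <;> linarith [hzball.1, hzball.2]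
    · rw [abs_lt] at hzball ⊢; constructor <;> linarith [hzball.1, hzball.2]
  have hFb : G b / (ψ 0 * φ b - φ 0 * ψ b) = F b := rfl
  have hFz : G z / (ψ 0 * φ z - φ 0 * ψ z) = F z := rfl
  rw [hFb, hFz]
  rcases lt_or_gt_of_ne hzne' with hzb | hbz
  · -- z < b : use MVT on [z, b]
    have hcont : ContinuousOn F (Set.Icc z b) := by
      intro y hy
      have : dist y b < min ε δ := hbetween y (Or.inr ⟨hy.1, hy.2⟩)
      exact ((hball y (lt_of_lt_of_le this (min_le_right _ _))).continuousAt).continuousWithinAt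
    have hderiv : ∀ y ∈ Set.Ioo z b, HasDerivAt F (F' y) y := fun y hy =>
      hball y (lt_of_lt_of_le (hbetween y (Or.inr ⟨le_of_lt hy.1, le_of_lt hy.2⟩))
        (min_le_right _ _))
    obtain ⟨ξ, hξmem, hξ⟩ := exists_hasDerivAt_eq_slope F F' hzb hcont hderiv
    have hξε : dist ξ b < ε :=
      lt_of_lt_of_le (hbetween ξ (Or.inr ⟨le_of_lt hξmem.1, le_of_lt hξmem.2⟩)) (min_le_left _ _)
    have hξneg : F' ξ < 0 :=
      (hε hξε (by simpa using ne_of_lt hξmem.2)).2 hξmem.2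
    rw [hξ] at hξneg
    have hbz' : 0 < b - z := by linarith
    have := (div_neg_iff.1 hξneg)
    rcases this with ⟨_, h2⟩ | ⟨h1, _⟩
    · linarith
    · linarith
  · -- b < z : use MVT on [b, z]
    have hcont : ContinuousOn F (Set.Icc b z) := by
      intro y hy
      have : dist y b < min ε δ := hbetween y (Or.inl ⟨hy.1, hy.2⟩)
      exact ((hball y (lt_of_lt_of_le this (min_le_right _ _))).continuousAt).continuousWithinAt
    have hderiv : ∀ y ∈ Set.Ioo b z, HasDerivAt F (F' y) y := fun y hy =>
      hball y (lt_of_lt_of_le (hbetween y (Or.inl ⟨le_of_lt hy.1, le_of_lt hy.2⟩))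
        (min_le_right _ _))
    obtain ⟨ξ, hξmem, hξ⟩ := exists_hasDerivAt_eq_slope F F' hbz hcont hderiv
    have hξε : dist ξ b < ε :=
      lt_of_lt_of_le (hbetween ξ (Or.inl ⟨le_of_lt hξmem.1, le_of_lt hξmem.2⟩)) (min_le_left _ _)
    have hξpos : 0 < F' ξ :=
      (hε hξε (by simpa using (ne_of_gt hξmem.1 : ξ ≠ b))).1 hξmem.1
    rw [hξ] at hξpos
    have hbz' : 0 < z - b := by linarith
    have := (div_pos_iff.1 hξpos)
    rcases this with ⟨h1, _⟩ | ⟨_, h2⟩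
    · linarith
    · linarith
end
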